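/- Let G be a bidirected tree with seed set S and boost set B. For every non-seed node u, the activation probability of u satisfies ap_B(u) = 1 − ∏_{v ∈ N(u)} (1 − ap_B(v\u) · p^B_{vu}). -/

import Mathlib

open Finset
open scoped Classical

noncomputable section

variable {V : Type*}

/-- The probability weight of the live-edge configuration `L ⊆ E`:
each edge `e ∈ E` is independently live with probability `p e`. -/
def edgeWeight [DecidableEq V] (E : Finset (V × V)) (p : V × V → ℝ)
    (L : Finset (V × V)) : ℝ :=
  (∏ e ∈ L, p e) * ∏ e ∈ E \ L, (1 - p e)

/-- `v` is activated in configuration `L`: it is reachable from some seed in `S`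
through live (directed) edges. -/
def Reaches (L : Finset (V × V)) (S : Finset V) (v : V) : Prop :=
  ∃ s ∈ S, Relation.ReflTransGen (fun a b => (a, b) ∈ L) s v

/-- Activation probability of node `v` under the live-edge model with edge set `E`,
edge probabilities `p`, and seed set `S`. -/
def ap [Fintype V] [DecidableEq V] (E : Finset (V × V)) (p : V × V → ℝ)
    (S : Finset V) (v : V) : ℝ :=
  ∑ L ∈ E.powerset, edgeWeight E p L * (if Reaches L S v then 1 else 0)

/-- Expected number of activated nodes lying in the node set `W`. -/
def spreadOn [Fintype V] [DecidableEq V] (E : Finset (V × V)) (p : V × V → ℝ)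
    (S W : Finset V) : ℝ :=
  ∑ L ∈ E.powerset, edgeWeight E p L * ((W.filter (fun v => Reaches L S v)).card : ℝ)

/-- The influence spread `σ_S`: expected total number of activated nodes. -/
def spread [Fintype V] [DecidableEq V] (E : Finset (V × V)) (p : V × V → ℝ)
    (S : Finset V) : ℝ :=
  spreadOn E p S Finset.univ

/-- Boosted edge probabilities: edges pointing into a boosted node use `p'`. -/
def pB (p p' : V × V → ℝ) (B : Finset V) : V × V → ℝ :=
  fun e => if e.2 ∈ B then p' e else p e

/-- The bidirected edge set of an undirected graph: each undirected edge is
replaced by the two directed edges. -/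
def treeEdges [Fintype V] [DecidableEq V] (T : SimpleGraph V) [DecidableRel T.Adj] :
    Finset (V × V) :=
  Finset.univ.filter (fun e => T.Adj e.1 e.2)

/-- `apSub E p S v u` is `ap_B(v\u)`: the activation probability of `v` in the
subtree `G_{v\u}` obtained by removing the directed edges `(u,v)` and `(v,u)`. -/
def apSub [Fintype V] [DecidableEq V] (E : Finset (V × V)) (p : V × V → ℝ)
    (S : Finset V) (v u : V) : ℝ :=
  ap (E \ {(u, v), (v, u)}) p S v

/-- The set of nodes of the connected component containing `v` w.r.t. edge set `E`. -/
def comp [Fintype V] [DecidableEq V] (E : Finset (V × V)) (v : V) : Finset V :=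
  Finset.univ.filter (fun w => Relation.ReflTransGen (fun a b => (a, b) ∈ E) v w)

/-- `gain E p S v u` is `g_B(v\u)`: in the subtree `G_{v\u}`, the expected number of
activated nodes when the seed set is `(S ∩ V(G_{v\u})) ∪ {v}` minus the expected
number when the seed set is `S ∩ V(G_{v\u})`. -/
def gain [Fintype V] [DecidableEq V] (E : Finset (V × V)) (p : V × V → ℝ)
    (S : Finset V) (v u : V) : ℝ :=
  spreadOn (E \ {(u, v), (v, u)}) p (insert v (S ∩ comp (E \ {(u, v), (v, u)}) v))
      (comp (E \ {(u, v), (v, u)}) v)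
    - spreadOn (E \ {(u, v), (v, u)}) p (S ∩ comp (E \ {(u, v), (v, u)}) v)
      (comp (E \ {(u, v), (v, u)}) v)

lemma edgeWeight_sum [DecidableEq V] (E : Finset (V × V)) (q : V × V → ℝ) :
    ∑ L ∈ E.powerset, edgeWeight E q L = 1 := by
  have h := Finset.prod_add q (fun e => 1 - q e) E
  simp only [add_sub_cancel] at h
  rw [Finset.prod_const_one] at h
  unfold edgeWeight
  exact h.symm

lemma edgeWeight_union [DecidableEq V] {A B : Finset (V × V)} (h : Disjoint A B)
    (q : V × V → ℝ) {LA LB : Finset (V × V)} (hA : LA ⊆ A) (hB : LB ⊆ B) :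
    edgeWeight (A ∪ B) q (LA ∪ LB) = edgeWeight A q LA * edgeWeight B q LB := by
  have hd : Disjoint LA LB := h.mono hA hB
  have hsd : (A ∪ B) \ (LA ∪ LB) = (A \ LA) ∪ (B \ LB) := by
    ext e
    simp only [Finset.mem_sdiff, Finset.mem_union]
    constructor
    · rintro ⟨hab, hn⟩
      push_neg at hn
      rcases hab with h1 | h1
      · exact Or.inl ⟨h1, hn.1⟩
      · exact Or.inr ⟨h1, hn.2⟩
    · rintro (⟨h1, h2⟩ | ⟨h1, h2⟩)
      · refine ⟨Or.inl h1, ?_⟩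
        rintro (h3 | h3)
        · exact h2 h3
        · exact (Finset.disjoint_left.mp h) h1 (hB h3)
      · refine ⟨Or.inr h1, ?_⟩
        rintro (h3 | h3)
        · exact (Finset.disjoint_left.mp h) (hA h3) h1
        · exact h2 h3
  have hd2 : Disjoint (A \ LA) (B \ LB) :=
    (h.mono (Finset.sdiff_subset) (Finset.sdiff_subset))
  unfold edgeWeight
  rw [hsd, Finset.prod_union hd, Finset.prod_union hd2]
  ring

lemma sum_powerset_union [DecidableEq V] {A B : Finset (V × V)} (h : Disjoint A B)
    (q : V × V → ℝ) (f g : Finset (V × V) → ℝ) :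
    ∑ L ∈ (A ∪ B).powerset, edgeWeight (A ∪ B) q L * (f (L ∩ A) * g (L ∩ B))
      = (∑ L ∈ A.powerset, edgeWeight A q L * f L)
        * (∑ L ∈ B.powerset, edgeWeight B q L * g L) := by
  rw [Finset.sum_mul_sum]
  rw [← Finset.sum_product']
  refine Finset.sum_bij' (fun L _ => (L ∩ A, L ∩ B)) (fun P _ => P.1 ∪ P.2) ?_ ?_ ?_ ?_ ?_
  · intro L hL
    simp only [Finset.mem_product, Finset.mem_powerset]
    exact ⟨Finset.inter_subset_right, Finset.inter_subset_right⟩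
  · intro P hP
    simp only [Finset.mem_product, Finset.mem_powerset] at hP
    exact Finset.mem_powerset.mpr (Finset.union_subset_union hP.1 hP.2)
  · intro L hL
    dsimp only
    rw [← Finset.inter_union_distrib_left]
    exact Finset.inter_eq_left.mpr (Finset.mem_powerset.mp hL)
  · intro P hP
    simp only [Finset.mem_product, Finset.mem_powerset] at hP
    have h1 : (P.1 ∪ P.2) ∩ A = P.1 := by
      ext e
      simp only [Finset.mem_inter, Finset.mem_union]
      constructor
      · rintro ⟨h1 | h1, h2⟩
        · exact h1
        · exact absurd h2 (fun h2 => (Finset.disjoint_left.mp h) h2 (hP.2 h1))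
      · intro h1
        exact ⟨Or.inl h1, hP.1 h1⟩
    have h2 : (P.1 ∪ P.2) ∩ B = P.2 := by
      ext e
      simp only [Finset.mem_inter, Finset.mem_union]
      constructor
      · rintro ⟨h1 | h1, h2⟩
        · exact absurd (hP.1 h1) (fun h3 => (Finset.disjoint_left.mp h) h3 h2)
        · exact h1
      · intro h1
        exact ⟨Or.inr h1, hP.2 h1⟩
    exact Prod.ext h1 h2
  · intro L hL
    have hLs := Finset.mem_powerset.mp hL
    have hrw : L = (L ∩ A) ∪ (L ∩ B) := by
      rw [← Finset.inter_union_distrib_left]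
      exact (Finset.inter_eq_left.mpr hLs).symm
    rw [show edgeWeight (A ∪ B) q L = edgeWeight A q (L ∩ A) * edgeWeight B q (L ∩ B) by
      conv_lhs => rw [hrw]
      exact edgeWeight_union h q Finset.inter_subset_right Finset.inter_subset_right]
    ring


lemma sum_powerset_biUnion [DecidableEq V] {ι : Type*} [DecidableEq ι]
    (q : V × V → ℝ) (s : Finset ι) (A : ι → Finset (V × V))
    (hdisj : ∀ i ∈ s, ∀ j ∈ s, i ≠ j → Disjoint (A i) (A j))
    (f : ι → Finset (V × V) → ℝ) :
    ∑ L ∈ (s.biUnion A).powerset, edgeWeight (s.biUnion A) q L * ∏ i ∈ s, f i (L ∩ A i)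
      = ∏ i ∈ s, ∑ M ∈ (A i).powerset, edgeWeight (A i) q M * f i M := by
  induction s using Finset.induction_on with
  | empty => simp [edgeWeight]
  | @insert a s ha ih =>
    have hd : Disjoint (A a) (s.biUnion A) := by
      rw [Finset.disjoint_biUnion_right]
      intro i hi
      exact hdisj a (Finset.mem_insert_self a s) i (Finset.mem_insert_of_mem hi)
        (fun hai => ha (hai ▸ hi))
    rw [Finset.biUnion_insert]
    have key : ∀ L ∈ (A a ∪ s.biUnion A).powerset,
        edgeWeight (A a ∪ s.biUnion A) q L * ∏ i ∈ insert a s, f i (L ∩ A i)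
        = edgeWeight (A a ∪ s.biUnion A) q L *
          (f a (L ∩ A a) * ∏ i ∈ s, f i ((L ∩ s.biUnion A) ∩ A i)) := by
      intro L hL
      congr 1
      rw [Finset.prod_insert ha]
      congr 1
      refine Finset.prod_congr rfl (fun i hi => ?_)
      congr 1
      rw [Finset.inter_assoc]
      congr 1
      exact (Finset.inter_eq_right.mpr (Finset.subset_biUnion_of_mem A hi)).symm
    rw [Finset.sum_congr rfl key, sum_powerset_union hd q (f a)
      (fun M => ∏ i ∈ s, f i (M ∩ A i))]
    rw [ih (fun i hi j hj hij => hdisj i (Finset.mem_insert_of_mem hi) j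
      (Finset.mem_insert_of_mem hj) hij)]
    rw [Finset.prod_insert ha]

lemma indicator_exists {ι : Type*} (s : Finset ι) (P : ι → Prop)
    [Decidable (∃ v ∈ s, P v)] [∀ v, Decidable (P v)] :
    (if ∃ v ∈ s, P v then (1 : ℝ) else 0)
      = 1 - ∏ v ∈ s, (1 - if P v then (1 : ℝ) else 0) := by
  by_cases h : ∃ v ∈ s, P v
  · obtain ⟨v, hv, hPv⟩ := h
    rw [if_pos ⟨v, hv, hPv⟩, Finset.prod_eq_zero hv (by simp [hPv])]
    ring
  · rw [if_neg h, Finset.prod_eq_one (fun v hv => by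
      have hnp : ¬ P v := fun hp => h ⟨v, hv, hp⟩
      simp [hnp])]
    ring

lemma ind_and (P Q : Prop) :
    (if P ∧ Q then (1 : ℝ) else 0) = (if P then (1 : ℝ) else 0) * (if Q then (1 : ℝ) else 0) := by
  by_cases hP : P <;> by_cases hQ : Q <;> simp [hP, hQ]


/-! ### Auxiliary graph definitions -/

/-- `CvP T u v w`: `w` is in the connected component of `v` after deleting `u`. -/
def CvP (T : SimpleGraph V) (u v w : V) : Prop :=
  Relation.ReflTransGen (fun a b => T.Adj a b ∧ a ≠ u ∧ b ≠ u) v w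

/-- The directed edges of the component of `v` after deleting `u`. -/
def Av [Fintype V] [DecidableEq V] (T : SimpleGraph V) [DecidableRel T.Adj] (u v : V) :
    Finset (V × V) :=
  (treeEdges T).filter (fun e => CvP T u v e.1 ∧ CvP T u v e.2)

/-- The edges of the component of `v` after deleting `u`, together with the two
edges between `u` and `v`. -/
def Ev [Fintype V] [DecidableEq V] (T : SimpleGraph V) [DecidableRel T.Adj] (u v : V) :
    Finset (V × V) :=
  insert (u, v) (insert (v, u) (Av T u v))

lemma mem_treeEdges [Fintype V] [DecidableEq V] {T : SimpleGraph V} [DecidableRel T.Adj]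
    {a b : V} : (a, b) ∈ treeEdges T ↔ T.Adj a b := by
  simp [treeEdges]

lemma CvP.self {T : SimpleGraph V} {u v : V} : CvP T u v v := Relation.ReflTransGen.refl

lemma CvP.ne_u {T : SimpleGraph V} {u v w : V} (hvu : v ≠ u) (h : CvP T u v w) : w ≠ u := by
  induction h with
  | refl => exact hvu
  | tail _ h2 _ => exact h2.2.2

lemma CvP.adj {T : SimpleGraph V} {u v w x : V} (h : CvP T u v w) (hadj : T.Adj w x)
    (hw : w ≠ u) (hx : x ≠ u) : CvP T u v x :=
  h.tail ⟨hadj, hw, hx⟩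

lemma CvP.toWalk {T : SimpleGraph V} {u v w : V} (hvu : v ≠ u) (h : CvP T u v w) :
    ∃ p : T.Walk v w, ∀ x ∈ p.support, x ≠ u := by
  induction h with
  | refl => exact ⟨SimpleGraph.Walk.nil, by simp [hvu]⟩
  | tail h1 h2 ih =>
    obtain ⟨p, hp⟩ := ih
    refine ⟨p.append (SimpleGraph.Walk.cons h2.1 SimpleGraph.Walk.nil), ?_⟩
    intro x hx
    rw [SimpleGraph.Walk.mem_support_append_iff] at hx
    rcases hx with hx | hx
    · exact hp x hx
    · simp only [SimpleGraph.Walk.support_cons, SimpleGraph.Walk.support_nil,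
        List.mem_cons, List.mem_singleton] at hx
      rcases hx with rfl | hx
      · exact h2.2.1
      · rcases hx with rfl | h'
        · exact h2.2.2
        · exact absurd h' List.not_mem_nil

lemma CvP.disjoint {T : SimpleGraph V} {u v w : V} (hT : T.IsTree) (hv : T.Adj u v)
    (hw : T.Adj u w) (hvw : v ≠ w) {x : V} (hxv : CvP T u v x) (hxw : CvP T u w x) :
    False := by
  obtain ⟨p1, hp1⟩ := hxv.toWalk hv.ne'
  obtain ⟨p2, hp2⟩ := hxw.toWalk hw.ne'
  have hqs : ∀ y ∈ (p1.append p2.reverse).support, y ≠ u := by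
    intro y hy
    rw [SimpleGraph.Walk.mem_support_append_iff] at hy
    rcases hy with hy | hy
    · exact hp1 y hy
    · exact hp2 y (by rwa [SimpleGraph.Walk.support_reverse, List.mem_reverse] at hy)
  have hu1 : u ∉ ((p1.append p2.reverse).toPath : T.Walk v w).support :=
    fun hmem => hqs u (SimpleGraph.Walk.support_toPath_subset _ hmem) (Eq.refl u)
  have hpcp : (SimpleGraph.Walk.cons hv.symm
      (SimpleGraph.Walk.cons hw SimpleGraph.Walk.nil) : T.Walk v w).IsPath := by
    rw [SimpleGraph.Walk.isPath_def]
    simp only [SimpleGraph.Walk.support_cons, SimpleGraph.Walk.support_nil]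
    simp [hv.ne', hvw, hw.ne]
  have hequ := hT.IsAcyclic.path_unique (p1.append p2.reverse).toPath ⟨_, hpcp⟩
  apply hu1
  rw [hequ]
  simp

lemma walk_CvP {T : SimpleGraph V} {u : V} {a x : V} (p : T.Walk a x)
    (hp : ∀ y ∈ p.support, y ≠ u) : CvP T u a x := by
  induction p with
  | nil => exact Relation.ReflTransGen.refl
  | @cons a b x h p ih =>
    refine Relation.ReflTransGen.head ⟨h, ?_, ?_⟩ (ih ?_)
    · exact hp a (by simp)
    · exact hp b (by simp [SimpleGraph.Walk.start_mem_support])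
    · intro y hy
      exact hp y (by simp [hy])

lemma exists_neighbor_CvP {T : SimpleGraph V} {u : V} (hT : T.IsTree) {x : V} (hx : x ≠ u) :
    ∃ v, T.Adj u v ∧ CvP T u v x := by
  obtain ⟨p⟩ := hT.isConnected.preconnected u x
  have hqp : (p.toPath : T.Walk u x).IsPath := p.toPath.2
  cases hq : (p.toPath : T.Walk u x) with
  | nil => exact absurd rfl hx
  | @cons _ b _ h p' =>
    rw [hq] at hqp
    rw [SimpleGraph.Walk.cons_isPath_iff] at hqp
    refine ⟨b, h, walk_CvP p' (fun y hy hyu => hqp.2 (hyu ▸ hy))⟩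

lemma reflTransGen_avoid {r : V → V → Prop} {u s b : V}
    (h : Relation.ReflTransGen r s b) (hs : s ≠ u) :
    (b ≠ u ∧ Relation.ReflTransGen (fun a c => r a c ∧ a ≠ u ∧ c ≠ u) s b)
      ∨ ∃ v, v ≠ u ∧ Relation.ReflTransGen (fun a c => r a c ∧ a ≠ u ∧ c ≠ u) s v ∧ r v u := by
  induction h with
  | refl => exact Or.inl ⟨hs, Relation.ReflTransGen.refl⟩
  | @tail b c _ hbc ih =>
    rcases ih with ⟨hb, hch⟩ | found
    · by_cases hc : c = u
      · subst hc
        exact Or.inr ⟨b, hb, hch, hbc⟩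
      · exact Or.inl ⟨hc, hch.tail ⟨hbc, hb, hc⟩⟩
    · exact Or.inr found

lemma mem_Av [Fintype V] [DecidableEq V] {T : SimpleGraph V} [DecidableRel T.Adj]
    {u v : V} {e : V × V} :
    e ∈ Av T u v ↔ T.Adj e.1 e.2 ∧ CvP T u v e.1 ∧ CvP T u v e.2 := by
  simp [Av, treeEdges, Finset.mem_filter]

lemma Av_fst_ne_u [Fintype V] [DecidableEq V] {T : SimpleGraph V} [DecidableRel T.Adj]
    {u v : V} (hvu : v ≠ u) {e : V × V} (he : e ∈ Av T u v) : e.1 ≠ u ∧ e.2 ≠ u := by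
  rw [mem_Av] at he
  exact ⟨CvP.ne_u hvu he.2.1, CvP.ne_u hvu he.2.2⟩

lemma reaches_iff_neighbor [Fintype V] [DecidableEq V] {T : SimpleGraph V}
    [DecidableRel T.Adj] {u : V} (hT : T.IsTree) {L : Finset (V × V)}
    (hL : L ⊆ treeEdges T) {S : Finset V} (hu : u ∉ S) :
    Reaches L S u ↔
      ∃ v ∈ T.neighborFinset u, (v, u) ∈ L ∧ Reaches (L ∩ Av T u v) S v := by
  constructor
  · rintro ⟨s, hs, hchain⟩
    have hsu : s ≠ u := fun h => hu (h ▸ hs)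
    rcases reflTransGen_avoid hchain hsu with ⟨hne, _⟩ | ⟨v, hvne, hch, hvu⟩
    · exact absurd rfl hne
    · have hadj : T.Adj v u := mem_treeEdges.mp (hL hvu)
      refine ⟨v, (T.mem_neighborFinset u v).mpr hadj.symm, hvu, s, hs, ?_⟩
      have key : ∀ a, Relation.ReflTransGen (fun a c => (a, c) ∈ L ∧ a ≠ u ∧ c ≠ u) a v →
          CvP T u v a ∧ Relation.ReflTransGen (fun x y => (x, y) ∈ L ∩ Av T u v) a v := by
        intro a h
        induction h using Relation.ReflTransGen.head_induction_on with
        | refl => exact ⟨CvP.self, Relation.ReflTransGen.refl⟩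
        | @head a c h1 h2 ih =>
          obtain ⟨hcv, hchc⟩ := ih
          obtain ⟨hmem, hane, hcne⟩ := h1
          have hadj2 : T.Adj a c := mem_treeEdges.mp (hL hmem)
          have hav : CvP T u v a := hcv.adj hadj2.symm hcne hane
          have heAv : (a, c) ∈ Av T u v := mem_Av.mpr ⟨hadj2, hav, hcv⟩
          exact ⟨hav, Relation.ReflTransGen.head
            (Finset.mem_inter.mpr ⟨hmem, heAv⟩) hchc⟩
      exact (key s hch).2
  · rintro ⟨v, hv, hvu, s, hs, hch⟩
    exact ⟨s, hs, Relation.ReflTransGen.tail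
      (Relation.ReflTransGen.mono (fun a b h => Finset.mem_of_mem_inter_left h) _ _ hch) hvu⟩

lemma reaches_sdiff_iff [Fintype V] [DecidableEq V] {T : SimpleGraph V}
    [DecidableRel T.Adj] {u v : V} (hT : T.IsTree) (hv : T.Adj u v) {L : Finset (V × V)}
    (hL : L ⊆ treeEdges T \ {(u, v), (v, u)}) (S : Finset V) :
    Reaches L S v ↔ Reaches (L ∩ Av T u v) S v := by
  constructor
  · rintro ⟨s, hs, hch⟩
    refine ⟨s, hs, ?_⟩
    have key : ∀ a, Relation.ReflTransGen (fun x y => (x, y) ∈ L) a v →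
        CvP T u v a ∧ Relation.ReflTransGen (fun x y => (x, y) ∈ L ∩ Av T u v) a v := by
      intro a h
      induction h using Relation.ReflTransGen.head_induction_on with
      | refl => exact ⟨CvP.self, Relation.ReflTransGen.refl⟩
      | @head a c h1 h2 ih =>
        obtain ⟨hcv, hchc⟩ := ih
        have hmem := hL h1
        rw [Finset.mem_sdiff] at hmem
        have hadj2 : T.Adj a c := mem_treeEdges.mp hmem.1
        have hcne : c ≠ u := hcv.ne_u hv.ne'
        have hane : a ≠ u := by
          rintro rfl
          by_cases hcvq : c = v
          · subst hcvq
            exact hmem.2 (by simp)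
          · exact CvP.disjoint hT hv hadj2 (fun h => hcvq h.symm) hcv CvP.self
        have hav : CvP T u v a := hcv.adj hadj2.symm hcne hane
        have heAv : (a, c) ∈ Av T u v := mem_Av.mpr ⟨hadj2, hav, hcv⟩
        exact ⟨hav, Relation.ReflTransGen.head
          (Finset.mem_inter.mpr ⟨h1, heAv⟩) hchc⟩
    exact (key s hch).2
  · rintro ⟨s, hs, hch⟩
    exact ⟨s, hs, Relation.ReflTransGen.mono
      (fun a b h => Finset.mem_of_mem_inter_left h) _ _ hch⟩

lemma sum_powerset_marginal [DecidableEq V] {A B : Finset (V × V)} (h : Disjoint A B)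
    (q : V × V → ℝ) (f : Finset (V × V) → ℝ) :
    ∑ L ∈ (A ∪ B).powerset, edgeWeight (A ∪ B) q L * f (L ∩ A)
      = ∑ L ∈ A.powerset, edgeWeight A q L * f L := by
  have h2 := sum_powerset_union h q f (fun _ => (1 : ℝ))
  simpa [edgeWeight_sum] using h2

lemma sum_powerset_marginal' [DecidableEq V] {A B : Finset (V × V)} (h : Disjoint A B)
    (q : V × V → ℝ) (g : Finset (V × V) → ℝ) :
    ∑ L ∈ (A ∪ B).powerset, edgeWeight (A ∪ B) q L * g (L ∩ B)
      = ∑ L ∈ B.powerset, edgeWeight B q L * g L := by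
  have h2 := sum_powerset_union h q (fun _ => (1 : ℝ)) g
  simpa [edgeWeight_sum] using h2

lemma apSub_eq_Av [Fintype V] [DecidableEq V] {T : SimpleGraph V} [DecidableRel T.Adj]
    {u v : V} (hT : T.IsTree) (hv : T.Adj u v) (q : V × V → ℝ) (S : Finset V) :
    apSub (treeEdges T) q S v u
      = ∑ M ∈ (Av T u v).powerset, edgeWeight (Av T u v) q M *
          (if Reaches M S v then 1 else 0) := by
  have hAvE : Av T u v ⊆ treeEdges T \ {(u, v), (v, u)} := by
    intro e he
    have h1 := Av_fst_ne_u hv.ne' he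
    rw [mem_Av] at he
    rw [Finset.mem_sdiff]
    constructor
    · obtain ⟨a, b⟩ := e
      exact mem_treeEdges.mpr he.1
    · intro hmem
      simp only [Finset.mem_insert, Finset.mem_singleton] at hmem
      rcases hmem with rfl | rfl
      · exact h1.1 rfl
      · exact h1.2 rfl
  have hsplit : treeEdges T \ {(u, v), (v, u)}
      = Av T u v ∪ ((treeEdges T \ {(u, v), (v, u)}) \ Av T u v) :=
    (Finset.union_sdiff_of_subset hAvE).symm
  unfold apSub ap
  calc ∑ L ∈ (treeEdges T \ {(u, v), (v, u)}).powerset,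
        edgeWeight (treeEdges T \ {(u, v), (v, u)}) q L * (if Reaches L S v then 1 else 0)
      = ∑ L ∈ (treeEdges T \ {(u, v), (v, u)}).powerset,
          edgeWeight (treeEdges T \ {(u, v), (v, u)}) q L *
            (if Reaches (L ∩ Av T u v) S v then 1 else 0) := by
        refine Finset.sum_congr rfl (fun L hL => ?_)
        congr 1
        exact if_congr (reaches_sdiff_iff hT hv (Finset.mem_powerset.mp hL) S) rfl rfl
    _ = ∑ M ∈ (Av T u v).powerset, edgeWeight (Av T u v) q M *
          (if Reaches M S v then 1 else 0) := by
        rw [hsplit]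
        exact sum_powerset_marginal (Finset.disjoint_sdiff) q
          (fun M => if Reaches M S v then 1 else 0)

lemma sum_singleton_ind [DecidableEq V] (q : V × V → ℝ) (e : V × V) :
    ∑ N ∈ ({e} : Finset (V × V)).powerset,
        edgeWeight {e} q N * (if e ∈ N then (1 : ℝ) else 0) = q e := by
  have h1 : ({e} : Finset (V × V)).powerset = {∅, {e}} := by
    rw [show ({e} : Finset (V × V)) = insert e ∅ from rfl, Finset.powerset_insert]
    simp only [Finset.powerset_empty, Finset.image_singleton]
    rw [← Finset.insert_eq]
  rw [h1, Finset.sum_insert (Finset.notMem_singleton.mpr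
    (Ne.symm (Finset.singleton_ne_empty e))), Finset.sum_singleton]
  simp [edgeWeight]

set_option maxHeartbeats 2000000 in
lemma factor_eq [Fintype V] [DecidableEq V] {T : SimpleGraph V} [DecidableRel T.Adj]
    {u v : V} (hT : T.IsTree) (hv : T.Adj u v) (q : V × V → ℝ) (S : Finset V) :
    ∑ M ∈ (Ev T u v).powerset, edgeWeight (Ev T u v) q M *
        (if (v, u) ∈ M ∧ Reaches (M ∩ Av T u v) S v then (1 : ℝ) else 0)
      = q (v, u) * apSub (treeEdges T) q S v u := by
  have hvuAv : (v, u) ∉ Av T u v := fun h => (Av_fst_ne_u hv.ne' h).2 rfl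
  have huvAv : (u, v) ∉ Av T u v := fun h => (Av_fst_ne_u hv.ne' h).1 rfl
  have hEv : Ev T u v = {(v, u)} ∪ (insert (u, v) (Av T u v)) := by
    rw [Ev, Finset.insert_comm, ← Finset.insert_eq]
  have hdisj1 : Disjoint ({(v, u)} : Finset (V × V)) (insert (u, v) (Av T u v)) := by
    rw [Finset.disjoint_left]
    intro e he hmem
    rw [Finset.mem_singleton] at he
    subst he
    rw [Finset.mem_insert] at hmem
    rcases hmem with h | h
    · exact hv.ne' (congrArg Prod.fst h)
    · exact hvuAv h
  have hdisj2 : Disjoint ({(u, v)} : Finset (V × V)) (Av T u v) := by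
    rw [Finset.disjoint_left]
    intro e he hmem
    rw [Finset.mem_singleton] at he
    subst he
    exact huvAv hmem
  calc ∑ M ∈ (Ev T u v).powerset, edgeWeight (Ev T u v) q M *
        (if (v, u) ∈ M ∧ Reaches (M ∩ Av T u v) S v then (1 : ℝ) else 0)
      = ∑ M ∈ (({(v, u)} : Finset (V × V)) ∪ (insert (u, v) (Av T u v))).powerset,
          edgeWeight (({(v, u)} : Finset (V × V)) ∪ (insert (u, v) (Av T u v))) q M *
          ((if (v, u) ∈ M ∩ {(v, u)} then (1 : ℝ) else 0) *
            (if Reaches ((M ∩ insert (u, v) (Av T u v)) ∩ Av T u v) S v then (1 : ℝ) else 0)) := by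
        rw [← hEv]
        refine Finset.sum_congr rfl (fun M hM => ?_)
        congr 1
        have hMA : M ∩ insert (u, v) (Av T u v) ∩ Av T u v = M ∩ Av T u v := by
          rw [Finset.inter_assoc, Finset.inter_eq_right.mpr (Finset.subset_insert _ _)]
        rw [hMA]
        by_cases h1 : (v, u) ∈ M <;>
          by_cases h2 : Reaches (M ∩ Av T u v) S v <;>
            simp [h1, h2]
    _ = (∑ N ∈ ({(v, u)} : Finset (V × V)).powerset,
          edgeWeight {(v, u)} q N * (if (v, u) ∈ N then (1 : ℝ) else 0)) *
        (∑ N ∈ (insert (u, v) (Av T u v)).powerset,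
          edgeWeight (insert (u, v) (Av T u v)) q N *
            (if Reaches (N ∩ Av T u v) S v then (1 : ℝ) else 0)) :=
        sum_powerset_union hdisj1 q (fun N => if (v, u) ∈ N then (1 : ℝ) else 0)
          (fun N => if Reaches (N ∩ Av T u v) S v then (1 : ℝ) else 0)
    _ = q (v, u) * apSub (treeEdges T) q S v u := by
        rw [sum_singleton_ind]
        congr 1
        rw [apSub_eq_Av hT hv q S]
        rw [show insert (u, v) (Av T u v) = ({(u, v)} : Finset (V × V)) ∪ Av T u v from
          Finset.insert_eq _ _]
        exact sum_powerset_marginal' hdisj2 q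
          (fun M => if Reaches M S v then (1 : ℝ) else 0)

lemma Ev_subset [Fintype V] [DecidableEq V] {T : SimpleGraph V} [DecidableRel T.Adj]
    {u v : V} (hv : T.Adj u v) : Ev T u v ⊆ treeEdges T := by
  intro e he
  rw [Ev, Finset.mem_insert, Finset.mem_insert] at he
  rcases he with rfl | rfl | he
  · exact mem_treeEdges.mpr hv
  · exact mem_treeEdges.mpr hv.symm
  · exact Finset.filter_subset _ _ he

lemma treeEdges_eq_biUnion [Fintype V] [DecidableEq V] {T : SimpleGraph V}
    [DecidableRel T.Adj] (hT : T.IsTree) (u : V) :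
    treeEdges T = (T.neighborFinset u).biUnion (fun v => Ev T u v) := by
  apply Finset.Subset.antisymm
  · intro e he
    obtain ⟨a, b⟩ := e
    have hadj : T.Adj a b := mem_treeEdges.mp he
    rw [Finset.mem_biUnion]
    by_cases ha : a = u
    · subst ha
      exact ⟨b, (T.mem_neighborFinset a b).mpr hadj, by simp [Ev]⟩
    · by_cases hb : b = u
      · subst hb
        exact ⟨a, (T.mem_neighborFinset b a).mpr hadj.symm, by simp [Ev]⟩
      · obtain ⟨v, hvadj, hcv⟩ := exists_neighbor_CvP hT ha
        have hcb : CvP T u v b := hcv.adj hadj ha hb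
        exact ⟨v, (T.mem_neighborFinset u v).mpr hvadj,
          Finset.mem_insert_of_mem (Finset.mem_insert_of_mem
            (mem_Av.mpr ⟨hadj, hcv, hcb⟩))⟩
  · intro e he
    rw [Finset.mem_biUnion] at he
    obtain ⟨v, hv, hev⟩ := he
    exact Ev_subset ((T.mem_neighborFinset u v).mp hv) hev

lemma Ev_disjoint [Fintype V] [DecidableEq V] {T : SimpleGraph V} [DecidableRel T.Adj]
    {u v w : V} (hT : T.IsTree) (hv : T.Adj u v) (hw : T.Adj u w) (hvw : v ≠ w) :
    Disjoint (Ev T u v) (Ev T u w) := by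
  rw [Finset.disjoint_left]
  intro e hev hew
  rw [Ev, Finset.mem_insert, Finset.mem_insert] at hev hew
  rcases hev with rfl | rfl | hev
  · rcases hew with h | h | h
    · exact hvw (congrArg Prod.snd h)
    · exact hw.ne (congrArg Prod.fst h)
    · exact (Av_fst_ne_u hw.ne' h).1 rfl
  · rcases hew with h | h | h
    · exact hv.ne' (congrArg Prod.fst h)
    · exact hvw (congrArg Prod.fst h)
    · exact (Av_fst_ne_u hw.ne' h).2 rfl
  · rcases hew with h | h | h
    · exact (Av_fst_ne_u hv.ne' (h ▸ hev)).1 rfl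
    · exact (Av_fst_ne_u hv.ne' (h ▸ hev)).2 rfl
    · exact CvP.disjoint hT hv hw hvw (mem_Av.mp hev).2.1 (mem_Av.mp h).2.1

set_option maxHeartbeats 4000000 in
/-- On a bidirected tree with seed set `S` and boost set `B`, for every non-seed
node `u`: `ap_B(u) = 1 − ∏_{v ∈ N(u)} (1 − ap_B(v\u) · p^B_{vu})`. -/
theorem ap_eq_prod_neighbors [Fintype V] [DecidableEq V]
    (T : SimpleGraph V) [DecidableRel T.Adj] (hT : T.IsTree)
    (p p' : V × V → ℝ)
    (hp0 : ∀ e, 0 ≤ p e) (hpp' : ∀ e, p e ≤ p' e) (hp'1 : ∀ e, p' e ≤ 1)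
    (S B : Finset V) (u : V) (hu : u ∉ S) :
    ap (treeEdges T) (pB p p' B) S u =
      1 - ∏ v ∈ T.neighborFinset u,
        (1 - apSub (treeEdges T) (pB p p' B) S v u * pB p p' B (v, u)) := by
  set q : V × V → ℝ := pB p p' B with hq
  set N := T.neighborFinset u with hN
  have hNadj : ∀ v ∈ N, T.Adj u v := fun v hv => (T.mem_neighborFinset u v).mp hv
  have hdisj : ∀ v ∈ N, ∀ w ∈ N, v ≠ w → Disjoint (Ev T u v) (Ev T u w) :=
    fun v hv w hw hvw => Ev_disjoint hT (hNadj v hv) (hNadj w hw) hvw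
  have hE := treeEdges_eq_biUnion hT u
  calc ap (treeEdges T) q S u
      = ∑ L ∈ (treeEdges T).powerset, edgeWeight (treeEdges T) q L *
          (1 - ∏ v ∈ N, (1 - (if (v, u) ∈ (L ∩ Ev T u v) ∧
            Reaches ((L ∩ Ev T u v) ∩ Av T u v) S v then (1 : ℝ) else 0))) := by
        unfold ap
        refine Finset.sum_congr rfl (fun L hL => ?_)
        congr 1
        have hLE : L ⊆ treeEdges T := Finset.mem_powerset.mp hL
        have hiff1 : Reaches L S u ↔
            ∃ v ∈ N, ((v, u) ∈ L ∧ Reaches (L ∩ Av T u v) S v) :=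
          reaches_iff_neighbor hT hLE hu
        refine (if_congr hiff1 rfl rfl).trans ?_
        refine (indicator_exists N
          (fun v => (v, u) ∈ L ∧ Reaches (L ∩ Av T u v) S v)).trans ?_
        congr 1
        refine Finset.prod_congr rfl (fun v hv => ?_)
        congr 1
        have h1 : (L ∩ Ev T u v) ∩ Av T u v = L ∩ Av T u v := by
          rw [Finset.inter_assoc]
          congr 1
          exact Finset.inter_eq_right.mpr
            (Finset.subset_insert _ _ |>.trans (Finset.subset_insert _ _) |> fun h => h)
        have hEvmem : (v, u) ∈ Ev T u v :=
          Finset.mem_insert_of_mem (Finset.mem_insert_self _ _)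
        have h2 : ((v, u) ∈ L ∩ Ev T u v) ↔ ((v, u) ∈ L) :=
          ⟨fun h => (Finset.mem_inter.mp h).1,
            fun h => Finset.mem_inter.mpr ⟨h, hEvmem⟩⟩
        rw [h1]
        exact if_congr (and_congr_left' h2.symm) rfl rfl
    _ = (∑ L ∈ (treeEdges T).powerset, edgeWeight (treeEdges T) q L)
        - ∑ L ∈ (treeEdges T).powerset, edgeWeight (treeEdges T) q L *
            ∏ v ∈ N, (1 - (if (v, u) ∈ (L ∩ Ev T u v) ∧
              Reaches ((L ∩ Ev T u v) ∩ Av T u v) S v then (1 : ℝ) else 0)) := by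
        rw [← Finset.sum_sub_distrib]
        exact Finset.sum_congr rfl (fun L _ => by ring)
    _ = 1 - ∏ v ∈ N, ∑ M ∈ (Ev T u v).powerset, edgeWeight (Ev T u v) q M *
          (1 - (if (v, u) ∈ M ∧ Reaches (M ∩ Av T u v) S v then (1 : ℝ) else 0)) := by
        rw [edgeWeight_sum]
        congr 1
        rw [hE]
        exact sum_powerset_biUnion q N (fun v => Ev T u v) hdisj
          (fun v M => 1 - (if (v, u) ∈ M ∧ Reaches (M ∩ Av T u v) S v then (1 : ℝ) else 0))
    _ = 1 - ∏ v ∈ N, (1 - q (v, u) * apSub (treeEdges T) q S v u) := by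
        congr 1
        refine Finset.prod_congr rfl (fun v hv => ?_)
        have hsplit : ∑ M ∈ (Ev T u v).powerset, edgeWeight (Ev T u v) q M *
            (1 - (if (v, u) ∈ M ∧ Reaches (M ∩ Av T u v) S v then (1 : ℝ) else 0))
            = (∑ M ∈ (Ev T u v).powerset, edgeWeight (Ev T u v) q M)
              - ∑ M ∈ (Ev T u v).powerset, edgeWeight (Ev T u v) q M *
                (if (v, u) ∈ M ∧ Reaches (M ∩ Av T u v) S v then (1 : ℝ) else 0) := by
          rw [← Finset.sum_sub_distrib]
          exact Finset.sum_congr rfl (fun M _ => by ring)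
        rw [hsplit, edgeWeight_sum, factor_eq hT (hNadj v hv) q S]
    _ = 1 - ∏ v ∈ N, (1 - apSub (treeEdges T) q S v u * q (v, u)) := by
        congr 1
        exact Finset.prod_congr rfl (fun v _ => by ring)

end
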